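/- (Pohozaev identity on circles, radial case.) Let u : ℝ² → ℝ^m be twice continuously differentiable and satisfy (∂u/∂x_i) · Δu = 0 almost everywhere in ℝ² for i = 1, 2. Then for every x₀ ∈ ℝ² and every r > 0: 2∫₀^{2π} |(cos θ ∂₁u + sin θ ∂₂u)(x₀ + re^{iθ})|² dθ = ∫₀^{2π} |∇u(x₀ + re^{iθ})|² dθ; equivalently ∫₀^{2π} |∂u/∂ν|² dθ = ∫₀^{2π} |(1/r)∂u/∂θ|² dθ, where ∂u/∂ν = cos θ ∂₁u + sin θ ∂₂u is the radial derivative and (1/r)∂u/∂θ = -sin θ ∂₁u + cos θ ∂₂u the normalized angular derivative, evaluated at x₀ + re^{iθ}. -/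

import Mathlib

open Real MeasureTheory intervalIntegral

/-- First partial derivative `∂₁u` of a map `u : ℝ² → ℝ^m`. -/
noncomputable def pd1 {m : ℕ} (u : ℝ × ℝ → EuclideanSpace ℝ (Fin m)) (x : ℝ × ℝ) :
    EuclideanSpace ℝ (Fin m) :=
  fderiv ℝ u x (1, 0)

/-- Second partial derivative `∂₂u` of a map `u : ℝ² → ℝ^m`. -/
noncomputable def pd2 {m : ℕ} (u : ℝ × ℝ → EuclideanSpace ℝ (Fin m)) (x : ℝ × ℝ) :
    EuclideanSpace ℝ (Fin m) :=
  fderiv ℝ u x (0, 1)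

/-- The componentwise Laplacian `Δu = ∂₁₁u + ∂₂₂u` of a map `u : ℝ² → ℝ^m`. -/
noncomputable def lap2 {m : ℕ} (u : ℝ × ℝ → EuclideanSpace ℝ (Fin m)) (x : ℝ × ℝ) :
    EuclideanSpace ℝ (Fin m) :=
  fderiv ℝ (pd1 u) x (1, 0) + fderiv ℝ (pd2 u) x (0, 1)

variable {m : ℕ}

/-- The pair `(|∂₁u|² - |∂₂u|², -2 ∂₁u·∂₂u)` as a map `ℝ² → ℝ²`. -/
noncomputable def hopfPair (u : ℝ × ℝ → EuclideanSpace ℝ (Fin m)) (x : ℝ × ℝ) : ℝ × ℝ :=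
  ((inner ℝ (pd1 u x) (pd1 u x) : ℝ) - (inner ℝ (pd2 u x) (pd2 u x) : ℝ),
   -2 * (inner ℝ (pd1 u x) (pd2 u x) : ℝ))

/-- The Hopf differential of `u` as a function on `ℂ`. -/
noncomputable def hopf (u : ℝ × ℝ → EuclideanSpace ℝ (Fin m)) (z : ℂ) : ℂ :=
  Complex.equivRealProdCLM.symm (hopfPair u (z.re, z.im))

lemma contDiff_pd1 {u : ℝ × ℝ → EuclideanSpace ℝ (Fin m)} (hu : ContDiff ℝ 2 u) :
    ContDiff ℝ 1 (pd1 u) :=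
  (hu.fderiv_right (by norm_num)).clm_apply contDiff_const

lemma contDiff_pd2 {u : ℝ × ℝ → EuclideanSpace ℝ (Fin m)} (hu : ContDiff ℝ 2 u) :
    ContDiff ℝ 1 (pd2 u) :=
  (hu.fderiv_right (by norm_num)).clm_apply contDiff_const

lemma sym_second {u : ℝ × ℝ → EuclideanSpace ℝ (Fin m)} (hu : ContDiff ℝ 2 u) (x : ℝ × ℝ) :
    fderiv ℝ (pd1 u) x (0, 1) = fderiv ℝ (pd2 u) x (1, 0) := by
  set f' := fderiv ℝ u with hf'def
  have hf'cd : ContDiff ℝ 1 f' := hu.fderiv_right (by norm_num)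
  have hf' : ∀ y, HasFDerivAt u (f' y) y := fun y =>
    (hu.differentiable (by norm_num) y).hasFDerivAt
  have hf'' : HasFDerivAt f' (fderiv ℝ f' x) x :=
    (hf'cd.differentiable one_ne_zero x).hasFDerivAt
  have key : ∀ v w : ℝ × ℝ, fderiv ℝ f' x v w = fderiv ℝ f' x w v :=
    second_derivative_symmetric hf' hf''
  have h1 : HasFDerivAt (pd1 u)
      ((ContinuousLinearMap.apply ℝ (EuclideanSpace ℝ (Fin m)) ((1:ℝ), (0:ℝ))).comp
        (fderiv ℝ f' x)) x :=
    (ContinuousLinearMap.apply ℝ (EuclideanSpace ℝ (Fin m)) ((1:ℝ), (0:ℝ))).hasFDerivAt.comp x hf''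
  have h2 : HasFDerivAt (pd2 u)
      ((ContinuousLinearMap.apply ℝ (EuclideanSpace ℝ (Fin m)) ((0:ℝ), (1:ℝ))).comp
        (fderiv ℝ f' x)) x :=
    (ContinuousLinearMap.apply ℝ (EuclideanSpace ℝ (Fin m)) ((0:ℝ), (1:ℝ))).hasFDerivAt.comp x hf''
  rw [h1.fderiv, h2.fderiv]
  simp only [ContinuousLinearMap.comp_apply, ContinuousLinearMap.apply_apply]
  exact key _ _

lemma hopfPair_hasFDerivAt {u : ℝ × ℝ → EuclideanSpace ℝ (Fin m)} (hu : ContDiff ℝ 2 u)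
    (x : ℝ × ℝ) :
    HasFDerivAt (hopfPair u)
      (((fderivInnerCLM ℝ (pd1 u x, pd1 u x)).comp
          ((fderiv ℝ (pd1 u) x).prod (fderiv ℝ (pd1 u) x))
        - (fderivInnerCLM ℝ (pd2 u x, pd2 u x)).comp
            ((fderiv ℝ (pd2 u) x).prod (fderiv ℝ (pd2 u) x))).prod
        ((-2 : ℝ) • ((fderivInnerCLM ℝ (pd1 u x, pd2 u x)).comp
          ((fderiv ℝ (pd1 u) x).prod (fderiv ℝ (pd2 u) x))))) x := by
  have h1 : HasFDerivAt (pd1 u) (fderiv ℝ (pd1 u) x) x :=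
    ((contDiff_pd1 hu).differentiable one_ne_zero x).hasFDerivAt
  have h2 : HasFDerivAt (pd2 u) (fderiv ℝ (pd2 u) x) x :=
    ((contDiff_pd2 hu).differentiable one_ne_zero x).hasFDerivAt
  exact HasFDerivAt.prodMk ((h1.inner ℝ h1).sub (h2.inner ℝ h2)) ((h1.inner ℝ h2).const_mul (-2))
lemma diffAt_complex_of_real {f : ℂ → ℂ} {L : ℂ →L[ℝ] ℂ} {x w : ℂ}
    (h : HasFDerivAt f L x) (h1 : L 1 = w) (hI : L Complex.I = Complex.I * w) :
    DifferentiableAt ℂ f x := by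
  have hL : ∀ z : ℂ, L z = z * w := by
    intro z
    have hz : z = z.re • (1:ℂ) + z.im • Complex.I := by
      simp [Complex.real_smul, Complex.re_add_im]
    rw [hz, map_add, _root_.map_smul, _root_.map_smul, h1, hI]
    simp only [Complex.real_smul]
    rw [← Complex.re_add_im z]
    ring
  have h2 : HasFDerivAt f (ContinuousLinearMap.smulRight (1 : ℂ →L[ℂ] ℂ) w) x := by
    rw [hasFDerivAt_iff_isLittleO_nhds_zero] at h ⊢
    have : (fun h' : ℂ => f (x + h') - f x
        - (ContinuousLinearMap.smulRight (1 : ℂ →L[ℂ] ℂ) w) h')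
        = fun h' => f (x + h') - f x - L h' := by
      funext h'
      rw [hL]
      simp [smul_eq_mul, mul_comm]
    rw [this]
    exact h
  exact h2.differentiableAt

lemma hopf_differentiableAt {u : ℝ × ℝ → EuclideanSpace ℝ (Fin m)} (hu : ContDiff ℝ 2 u)
    (h0 : ∀ x, (inner ℝ (pd1 u x) (lap2 u x) : ℝ) = 0 ∧ (inner ℝ (pd2 u x) (lap2 u x) : ℝ) = 0)
    (z : ℂ) : DifferentiableAt ℂ (hopf u) z := by
  set x : ℝ × ℝ := (z.re, z.im) with hxdef
  set DΦ := (((fderivInnerCLM ℝ (pd1 u x, pd1 u x)).comp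
          ((fderiv ℝ (pd1 u) x).prod (fderiv ℝ (pd1 u) x))
        - (fderivInnerCLM ℝ (pd2 u x, pd2 u x)).comp
            ((fderiv ℝ (pd2 u) x).prod (fderiv ℝ (pd2 u) x))).prod
        ((-2 : ℝ) • ((fderivInnerCLM ℝ (pd1 u x, pd2 u x)).comp
          ((fderiv ℝ (pd1 u) x).prod (fderiv ℝ (pd2 u) x))))) with hDΦ
  have hΦ : HasFDerivAt (hopfPair u) DΦ x := hopfPair_hasFDerivAt hu x
  have hgeq : hopf u = fun w : ℂ =>
      (Complex.equivRealProdCLM.symm : (ℝ × ℝ) →L[ℝ] ℂ)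
        (hopfPair u ((Complex.equivRealProdCLM : ℂ →L[ℝ] ℝ × ℝ) w)) := by
    funext w
    rfl
  set L : ℂ →L[ℝ] ℂ :=
    ((Complex.equivRealProdCLM.symm : (ℝ × ℝ) →L[ℝ] ℂ).comp DΦ).comp
      (Complex.equivRealProdCLM : ℂ →L[ℝ] ℝ × ℝ) with hLdef
  have hF : HasFDerivAt (hopf u) L z := by
    rw [hgeq]
    exact ((Complex.equivRealProdCLM.symm : (ℝ × ℝ) →L[ℝ] ℂ).hasFDerivAt.comp _
      (hΦ.comp z (Complex.equivRealProdCLM : ℂ →L[ℝ] ℝ × ℝ).hasFDerivAt))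
  -- abbreviations
  set p1 := pd1 u x
  set p2 := pd2 u x
  set a := fderiv ℝ (pd1 u) x ((1:ℝ), (0:ℝ)) with ha
  set b := fderiv ℝ (pd1 u) x ((0:ℝ), (1:ℝ)) with hb
  set c := fderiv ℝ (pd2 u) x ((1:ℝ), (0:ℝ)) with hc
  set d := fderiv ℝ (pd2 u) x ((0:ℝ), (1:ℝ)) with hd
  have hbc : b = c := sym_second hu x
  have h1 : (inner ℝ p1 (a + d) : ℝ) = 0 := (h0 x).1
  have h2 : (inner ℝ p2 (a + d) : ℝ) = 0 := (h0 x).2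
  have he1 : (Complex.equivRealProdCLM : ℂ →L[ℝ] ℝ × ℝ) 1 = ((1:ℝ), (0:ℝ)) := rfl
  have heI : (Complex.equivRealProdCLM : ℂ →L[ℝ] ℝ × ℝ) Complex.I = ((0:ℝ), (1:ℝ)) := rfl
  have hL1 : L 1 = Complex.equivRealProdCLM.symm
      ((inner ℝ p1 a : ℝ) + (inner ℝ a p1 : ℝ) - ((inner ℝ p2 c : ℝ) + (inner ℝ c p2 : ℝ)),
       -2 * ((inner ℝ p1 c : ℝ) + (inner ℝ a p2 : ℝ))) := by
    rw [hLdef]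
    simp only [ContinuousLinearMap.comp_apply, he1, hDΦ, ContinuousLinearMap.prod_apply,
      ContinuousLinearMap.sub_apply, ContinuousLinearMap.smul_apply, fderivInnerCLM_apply,
      smul_eq_mul]
    rw [← ha, ← hc]
    rfl
  have hLI : L Complex.I = Complex.equivRealProdCLM.symm
      ((inner ℝ p1 b : ℝ) + (inner ℝ b p1 : ℝ) - ((inner ℝ p2 d : ℝ) + (inner ℝ d p2 : ℝ)),
       -2 * ((inner ℝ p1 d : ℝ) + (inner ℝ b p2 : ℝ))) := by
    rw [hLdef]
    simp only [ContinuousLinearMap.comp_apply, heI, hDΦ, ContinuousLinearMap.prod_apply,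
      ContinuousLinearMap.sub_apply, ContinuousLinearMap.smul_apply, fderivInnerCLM_apply,
      smul_eq_mul]
    rw [← hb, ← hd]
    rfl
  refine diffAt_complex_of_real hF hL1 ?_
  rw [hLI]
  simp only [Complex.equivRealProdCLM_symm_apply]
  have hinner1 : (inner ℝ p1 a : ℝ) + (inner ℝ p1 d : ℝ) = 0 := by
    rw [← inner_add_right]; exact h1
  have hinner2 : (inner ℝ p2 a : ℝ) + (inner ℝ p2 d : ℝ) = 0 := by
    rw [← inner_add_right]; exact h2
  have e1 : (inner ℝ a p1 : ℝ) = inner ℝ p1 a := real_inner_comm _ _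
  have e2 : (inner ℝ c p2 : ℝ) = inner ℝ p2 c := real_inner_comm _ _
  have e3 : (inner ℝ b p1 : ℝ) = inner ℝ p1 b := real_inner_comm _ _
  have e4 : (inner ℝ d p2 : ℝ) = inner ℝ p2 d := real_inner_comm _ _
  have e5 : (inner ℝ b p2 : ℝ) = inner ℝ p2 b := real_inner_comm _ _
  have e6 : (inner ℝ a p2 : ℝ) = inner ℝ p2 a := real_inner_comm _ _
  have e7 : (inner ℝ p1 b : ℝ) = inner ℝ p1 c := by rw [hbc]
  have e8 : (inner ℝ b p2 : ℝ) = inner ℝ c p2 := by rw [hbc]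
  have e9 : (inner ℝ b p1 : ℝ) = inner ℝ c p1 := by rw [hbc]
  have e10 : (inner ℝ c p1 : ℝ) = inner ℝ p1 c := real_inner_comm _ _
  apply Complex.ext <;>
    simp only [Complex.add_re, Complex.add_im, Complex.mul_re, Complex.mul_im,
      Complex.sub_re, Complex.sub_im, Complex.neg_re, Complex.neg_im,
      Complex.I_re, Complex.I_im, Complex.ofReal_re, Complex.ofReal_im] <;>
    ring_nf <;>
    linarith [hinner1, hinner2, e1, e2, e3, e4, e5, e6, e7, e8, e9, e10]

lemma norm_comb {v w : EuclideanSpace ℝ (Fin m)} (cθ sθ : ℝ) :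
    ‖cθ • v + sθ • w‖ ^ 2
      = cθ ^ 2 * ‖v‖ ^ 2 + 2 * cθ * sθ * (inner ℝ v w : ℝ) + sθ ^ 2 * ‖w‖ ^ 2 := by
  rw [norm_add_sq_real, real_inner_smul_left, real_inner_smul_right, norm_smul, norm_smul,
    mul_pow, mul_pow, Real.norm_eq_abs, Real.norm_eq_abs, sq_abs, sq_abs]
  ring

/-- **Pohozaev identity on circles, radial case.** Let `u : ℝ² → ℝ^m` be `C²` with
`∂ᵢu · Δu = 0` a.e. for `i = 1,2`. Then for every `x₀ ∈ ℝ²` and `r > 0`,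
`2 ∫₀^{2π} |∂u/∂ν|² dθ = ∫₀^{2π} |∇u|² dθ` on `∂B(x₀,r)`, where
`∂u/∂ν = cos θ ∂₁u + sin θ ∂₂u` is evaluated at `x₀ + r e^{iθ}`. -/
theorem pohozaev_on_circles_radial {m : ℕ} (u : ℝ × ℝ → EuclideanSpace ℝ (Fin m))
    (hu : ContDiff ℝ 2 u)
    (heq : ∀ᵐ x : ℝ × ℝ,
      (inner ℝ (pd1 u x) (lap2 u x) : ℝ) = 0 ∧ (inner ℝ (pd2 u x) (lap2 u x) : ℝ) = 0) :
    ∀ (x₀ : ℝ × ℝ) (r : ℝ), 0 < r →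
      2 * ∫ θ in (0:ℝ)..(2 * π),
          ‖Real.cos θ • pd1 u (x₀.1 + r * Real.cos θ, x₀.2 + r * Real.sin θ)
            + Real.sin θ • pd2 u (x₀.1 + r * Real.cos θ, x₀.2 + r * Real.sin θ)‖ ^ 2
        = ∫ θ in (0:ℝ)..(2 * π),
            (‖pd1 u (x₀.1 + r * Real.cos θ, x₀.2 + r * Real.sin θ)‖ ^ 2
              + ‖pd2 u (x₀.1 + r * Real.cos θ, x₀.2 + r * Real.sin θ)‖ ^ 2) := by
  -- continuity facts
  have hp1c : Continuous (pd1 u) := (contDiff_pd1 hu).continuous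
  have hp2c : Continuous (pd2 u) := (contDiff_pd2 hu).continuous
  have hq1c : Continuous (fderiv ℝ (pd1 u)) :=
    ((contDiff_pd1 hu).fderiv_right (m := 0) le_rfl).continuous
  have hq2c : Continuous (fderiv ℝ (pd2 u)) :=
    ((contDiff_pd2 hu).fderiv_right (m := 0) le_rfl).continuous
  have hlapc : Continuous (lap2 u) := by
    have h1 : Continuous fun x => fderiv ℝ (pd1 u) x ((1:ℝ), (0:ℝ)) :=
      (ContinuousLinearMap.apply ℝ (EuclideanSpace ℝ (Fin m)) ((1:ℝ), (0:ℝ))).continuous.comp hq1c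
    have h2 : Continuous fun x => fderiv ℝ (pd2 u) x ((0:ℝ), (1:ℝ)) :=
      (ContinuousLinearMap.apply ℝ (EuclideanSpace ℝ (Fin m)) ((0:ℝ), (1:ℝ))).continuous.comp hq2c
    exact h1.add h2
  -- upgrade a.e. to everywhere
  have h0 : ∀ x, (inner ℝ (pd1 u x) (lap2 u x) : ℝ) = 0 ∧ (inner ℝ (pd2 u x) (lap2 u x) : ℝ) = 0 := by
    have hc1 : Continuous fun x => (inner ℝ (pd1 u x) (lap2 u x) : ℝ) := hp1c.inner hlapc
    have hc2 : Continuous fun x => (inner ℝ (pd2 u x) (lap2 u x) : ℝ) := hp2c.inner hlapc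
    have h1 : (fun x => (inner ℝ (pd1 u x) (lap2 u x) : ℝ)) = fun _ => 0 := by
      rw [← Continuous.ae_eq_iff_eq (volume : Measure (ℝ × ℝ)) hc1 continuous_const]
      filter_upwards [heq] with x hx using hx.1
    have h2 : (fun x => (inner ℝ (pd2 u x) (lap2 u x) : ℝ)) = fun _ => 0 := by
      rw [← Continuous.ae_eq_iff_eq (volume : Measure (ℝ × ℝ)) hc2 continuous_const]
      filter_upwards [heq] with x hx using hx.2
    exact fun x => ⟨congrFun h1 x, congrFun h2 x⟩
  have hdiff : ∀ z, DifferentiableAt ℂ (hopf u) z := hopf_differentiableAt hu h0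
  have hcont : Continuous (hopf u) :=
    continuous_iff_continuousAt.mpr fun z => (hdiff z).continuousAt
  intro x₀ r hr
  set c : ℂ := (x₀.1 : ℂ) + (x₀.2 : ℝ) * Complex.I with hcdef
  have hcre : c.re = x₀.1 := by simp [hcdef]
  have hcim : c.im = x₀.2 := by simp [hcdef]
  have hzero : (∮ z in C(c, r), (z - c) * hopf u z) = 0 :=
    Complex.circleIntegral_eq_zero_of_differentiable_on_off_countable hr.le Set.countable_empty
      (((continuous_id.sub continuous_const).mul hcont).continuousOn)
      (fun z _ => ((differentiableAt_id.sub (differentiableAt_const c)).mul (hdiff z)))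
  set H : ℝ → ℂ := fun θ => circleMap 0 r θ ^ 2 * hopf u (circleMap c r θ) with hHdef
  have hHcont : Continuous H :=
    ((continuous_circleMap 0 r).pow 2).mul (hcont.comp (continuous_circleMap c r))
  have hzero2 : ∫ θ in (0:ℝ)..(2*π), Complex.I * H θ = 0 := by
    rw [← hzero]
    simp only [circleIntegral, deriv_circleMap, circleMap_sub_center, smul_eq_mul]
    apply intervalIntegral.integral_congr
    intro θ _
    simp only [hHdef]
    ring
  rw [intervalIntegral.integral_const_mul] at hzero2
  have hHzero : ∫ θ in (0:ℝ)..(2*π), H θ = 0 := by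
    rcases mul_eq_zero.mp hzero2 with h | h
    · exact absurd h Complex.I_ne_zero
    · exact h
  have hre : ∫ θ in (0:ℝ)..(2*π), (H θ).re = 0 := by
    have h := Complex.reCLM.intervalIntegral_comp_comm (hHcont.intervalIntegrable (μ := volume) 0 (2*π))
    simp only [Complex.reCLM_apply] at h
    rw [h, hHzero, Complex.zero_re]
  have hmap : ∀ θ : ℝ, ((circleMap c r θ).re, (circleMap c r θ).im) = (x₀.1 + r * Real.cos θ, x₀.2 + r * Real.sin θ) := by
    intro θ
    simp [circleMap, hcdef, Complex.add_re, Complex.add_im, Complex.mul_re, Complex.mul_im,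
      Complex.exp_ofReal_mul_I_re, Complex.exp_ofReal_mul_I_im]
  have hpt : ∀ θ : ℝ, (H θ).re = r ^ 2 * (2 * ‖Real.cos θ • pd1 u (x₀.1 + r * Real.cos θ, x₀.2 + r * Real.sin θ) + Real.sin θ • pd2 u (x₀.1 + r * Real.cos θ, x₀.2 + r * Real.sin θ)‖ ^ 2 - (‖pd1 u (x₀.1 + r * Real.cos θ, x₀.2 + r * Real.sin θ)‖ ^ 2 + ‖pd2 u (x₀.1 + r * Real.cos θ, x₀.2 + r * Real.sin θ)‖ ^ 2)) := by
    intro θ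
    have hz2re : (circleMap 0 r θ).re = r * Real.cos θ := by
      simp [circleMap, Complex.exp_ofReal_mul_I_re, Complex.exp_ofReal_mul_I_im]
    have hz2im : (circleMap 0 r θ).im = r * Real.sin θ := by
      simp [circleMap, Complex.exp_ofReal_mul_I_re, Complex.exp_ofReal_mul_I_im]
    have hh : hopf u (circleMap c r θ)
        = ((hopfPair u (x₀.1 + r * Real.cos θ, x₀.2 + r * Real.sin θ)).1 : ℂ) + ((hopfPair u (x₀.1 + r * Real.cos θ, x₀.2 + r * Real.sin θ)).2 : ℝ) * Complex.I := by
      rw [hopf, hmap θ, Complex.equivRealProdCLM_symm_apply]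
    have hHre : (H θ).re
        = ((r * Real.cos θ) ^ 2 - (r * Real.sin θ) ^ 2) * (hopfPair u (x₀.1 + r * Real.cos θ, x₀.2 + r * Real.sin θ)).1
          - (2 * (r * Real.cos θ) * (r * Real.sin θ)) * (hopfPair u (x₀.1 + r * Real.cos θ, x₀.2 + r * Real.sin θ)).2 := by
      simp only [hHdef, hh, pow_two, Complex.mul_re, Complex.mul_im, Complex.add_re,
        Complex.add_im, Complex.ofReal_re, Complex.ofReal_im, Complex.I_re, Complex.I_im,
        hz2re, hz2im]
      ring
    rw [hHre, norm_comb]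
    simp only [hopfPair]
    rw [real_inner_self_eq_norm_sq, real_inner_self_eq_norm_sq]
    linear_combination (-(r ^ 2) * (‖pd1 u (x₀.1 + r * Real.cos θ, x₀.2 + r * Real.sin θ)‖ ^ 2 + ‖pd2 u (x₀.1 + r * Real.cos θ, x₀.2 + r * Real.sin θ)‖ ^ 2)) *
      (Real.sin_sq_add_cos_sq θ)
  have hPc : Continuous fun θ : ℝ => (x₀.1 + r * Real.cos θ, x₀.2 + r * Real.sin θ) :=
    (continuous_const.add (continuous_const.mul Real.continuous_cos)).prodMk
      (continuous_const.add (continuous_const.mul Real.continuous_sin))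
  have hAc : Continuous fun θ : ℝ => ‖Real.cos θ • pd1 u (x₀.1 + r * Real.cos θ, x₀.2 + r * Real.sin θ) + Real.sin θ • pd2 u (x₀.1 + r * Real.cos θ, x₀.2 + r * Real.sin θ)‖ ^ 2 :=
    (((Real.continuous_cos.smul (hp1c.comp hPc)).add
      (Real.continuous_sin.smul (hp2c.comp hPc))).norm.pow 2)
  have hBc : Continuous fun θ : ℝ => (‖pd1 u (x₀.1 + r * Real.cos θ, x₀.2 + r * Real.sin θ)‖ ^ 2 + ‖pd2 u (x₀.1 + r * Real.cos θ, x₀.2 + r * Real.sin θ)‖ ^ 2) :=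
    (((hp1c.comp hPc).norm.pow 2).add ((hp2c.comp hPc).norm.pow 2))
  have hA : IntervalIntegrable (fun θ : ℝ => ‖Real.cos θ • pd1 u (x₀.1 + r * Real.cos θ, x₀.2 + r * Real.sin θ) + Real.sin θ • pd2 u (x₀.1 + r * Real.cos θ, x₀.2 + r * Real.sin θ)‖ ^ 2) volume 0 (2*π) :=
    hAc.intervalIntegrable 0 (2*π)
  have hB : IntervalIntegrable (fun θ : ℝ => (‖pd1 u (x₀.1 + r * Real.cos θ, x₀.2 + r * Real.sin θ)‖ ^ 2 + ‖pd2 u (x₀.1 + r * Real.cos θ, x₀.2 + r * Real.sin θ)‖ ^ 2)) volume 0 (2*π) :=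
    hBc.intervalIntegrable 0 (2*π)
  have main0 : ∫ θ in (0:ℝ)..(2*π), r ^ 2 * (2 * ‖Real.cos θ • pd1 u (x₀.1 + r * Real.cos θ, x₀.2 + r * Real.sin θ) + Real.sin θ • pd2 u (x₀.1 + r * Real.cos θ, x₀.2 + r * Real.sin θ)‖ ^ 2 - (‖pd1 u (x₀.1 + r * Real.cos θ, x₀.2 + r * Real.sin θ)‖ ^ 2 + ‖pd2 u (x₀.1 + r * Real.cos θ, x₀.2 + r * Real.sin θ)‖ ^ 2))
      = ∫ θ in (0:ℝ)..(2*π), (H θ).re :=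
    intervalIntegral.integral_congr fun θ _ => (hpt θ).symm
  rw [hre, intervalIntegral.integral_const_mul] at main0
  have main : ∫ θ in (0:ℝ)..(2*π), (2 * ‖Real.cos θ • pd1 u (x₀.1 + r * Real.cos θ, x₀.2 + r * Real.sin θ) + Real.sin θ • pd2 u (x₀.1 + r * Real.cos θ, x₀.2 + r * Real.sin θ)‖ ^ 2 - (‖pd1 u (x₀.1 + r * Real.cos θ, x₀.2 + r * Real.sin θ)‖ ^ 2 + ‖pd2 u (x₀.1 + r * Real.cos θ, x₀.2 + r * Real.sin θ)‖ ^ 2)) = 0 := by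
    rcases mul_eq_zero.mp main0 with h | h
    · exact absurd h (pow_ne_zero 2 hr.ne')
    · exact h
  rw [intervalIntegral.integral_sub (hA.const_mul 2) hB,
    intervalIntegral.integral_const_mul] at main
  linarith [main]
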